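/- Fix an integer n ≥ 2 and r ∈ (0,1); set T = √(1−r²), s = √(n−1)/r and x = sT. Assume cos x + x·sin x ≠ 0 and set c = r²/((n−1)(x sin x + cos x)) and u(t) = c·cos(s t) − r²/(n−1). Then: (i) u''(t) + s²·u(t) = −1 for all t ∈ ℝ; (ii) T·u'(T) = u(T) and T·u'(−T) = −u(−T); (iii) ((n−1)/r²)·∫_{−T}^{T} u(t) dt = −2(u'(T) + T); and (iv) s·(u'(T) + T) = x − sin x/(x sin x + cos x). -/

import Mathlib

open Real

theorem cylinder_typeI_witness
    (n : ℕ) (hn : 2 ≤ n) (r : ℝ) (hr : 0 < r ∧ r < 1)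
    (T s x : ℝ)
    (hT : T = Real.sqrt (1 - r ^ 2))
    (hs : s = Real.sqrt ((n : ℝ) - 1) / r)
    (hx : x = s * T)
    (hne : Real.cos x + x * Real.sin x ≠ 0)
    (c : ℝ) (hc : c = r ^ 2 / (((n : ℝ) - 1) * (x * Real.sin x + Real.cos x)))
    (u : ℝ → ℝ) (hu : u = fun t => c * Real.cos (s * t) - r ^ 2 / ((n : ℝ) - 1)) :
    (∀ t : ℝ, deriv (deriv u) t + s ^ 2 * u t = -1) ∧
    (T * deriv u T = u T ∧ T * deriv u (-T) = -(u (-T))) ∧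
    (((n : ℝ) - 1) / r ^ 2 * ∫ t in (-T)..T, u t) = -2 * (deriv u T + T) ∧
    s * (deriv u T + T) = x - Real.sin x / (x * Real.sin x + Real.cos x) := by
  obtain ⟨hr0, hr1⟩ := hr
  have hn1 : (1 : ℝ) ≤ (n : ℝ) - 1 := by
    have : (2 : ℝ) ≤ (n : ℝ) := by exact_mod_cast hn
    linarith
  have hn0 : ((n : ℝ) - 1) ≠ 0 := by linarith
  have hs2 : s ^ 2 = ((n : ℝ) - 1) / r ^ 2 := by
    rw [hs, div_pow, Real.sq_sqrt (by linarith)]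
  have hspos : 0 < s := by
    rw [hs]
    exact div_pos (Real.sqrt_pos.mpr (by linarith)) hr0
  have hs0 : s ≠ 0 := ne_of_gt hspos
  -- derivative of u
  have hder : ∀ t : ℝ, HasDerivAt u (-(c * s) * Real.sin (s * t)) t := by
    intro t
    rw [hu]
    have h1 : HasDerivAt (fun t : ℝ => s * t) s t := by
      simpa using (hasDerivAt_id t).const_mul s
    have h2 : HasDerivAt (fun t : ℝ => Real.cos (s * t)) (-Real.sin (s * t) * s) t :=
      (Real.hasDerivAt_cos (s * t)).comp t h1
    have h3 := (h2.const_mul c).sub_const (r ^ 2 / ((n : ℝ) - 1))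
    exact h3.congr_deriv (by ring)
  have hder' : deriv u = fun t => -(c * s) * Real.sin (s * t) := by
    funext t; exact (hder t).deriv
  have hder2 : ∀ t : ℝ, HasDerivAt (deriv u) (-(c * s * s) * Real.cos (s * t)) t := by
    intro t
    rw [hder']
    have h1 : HasDerivAt (fun t : ℝ => s * t) s t := by
      simpa using (hasDerivAt_id t).const_mul s
    have h2 : HasDerivAt (fun t : ℝ => Real.sin (s * t)) (Real.cos (s * t) * s) t :=
      (Real.hasDerivAt_sin (s * t)).comp t h1
    have h3 := h2.const_mul (-(c * s))
    exact h3.congr_deriv (by ring)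
  -- key relation
  have hD : x * Real.sin x + Real.cos x ≠ 0 := by
    intro h; apply hne; linarith
  have hcrel : c * ((n : ℝ) - 1) * (x * Real.sin x + Real.cos x) = r ^ 2 := by
    rw [hc]; field_simp
  have hxT : s * T = x := hx.symm
  -- part (i)
  refine ⟨?_, ⟨?_, ?_⟩, ?_, ?_⟩
  · intro t
    rw [(hder2 t).deriv, hu]
    have : s ^ 2 * (r ^ 2 / ((n : ℝ) - 1)) = 1 := by
      rw [hs2]; field_simp
    simp only
    nlinarith [this]
  · rw [hder', hu]
    simp only [hxT]
    have hu2 : r ^ 2 / ((n : ℝ) - 1) = c * (x * Real.sin x + Real.cos x) := by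
      field_simp
      nlinarith [hcrel]
    rw [hu2]
    have hts : T * s = x := by rw [← hxT]; ring
    linear_combination (-(c * Real.sin x)) * hts
  · rw [hder', hu]
    simp only [mul_neg, Real.sin_neg, Real.cos_neg, hxT]
    have hu2 : r ^ 2 / ((n : ℝ) - 1) = c * (x * Real.sin x + Real.cos x) := by
      field_simp
      nlinarith [hcrel]
    rw [hu2]
    have hts : T * s = x := by rw [← hxT]; ring
    linear_combination (c * Real.sin x) * hts
  · -- integral
    have hint : (∫ t in (-T)..T, u t) = 2 * c * Real.sin x / s - 2 * T * (r ^ 2 / ((n : ℝ) - 1)) := by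
      rw [hu]
      rw [intervalIntegral.integral_sub]
      · rw [intervalIntegral.integral_const_mul,
          intervalIntegral.integral_comp_mul_left (fun y => Real.cos y) hs0,
          integral_cos, intervalIntegral.integral_const]
        simp only [mul_neg, hxT, Real.sin_neg, smul_eq_mul]
        field_simp
        ring
      · exact (continuous_const.mul
          (Real.continuous_cos.comp (continuous_const.mul continuous_id))).intervalIntegrable _ _
      · exact intervalIntegrable_const
    rw [hint, hder']
    simp only [hxT]
    have e1 : ((n : ℝ) - 1) / r ^ 2 * (2 * c * Real.sin x / s) = 2 * c * s * Real.sin x := by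
      rw [← hs2]; field_simp
    have e2 : ((n : ℝ) - 1) / r ^ 2 * (2 * T * (r ^ 2 / ((n : ℝ) - 1))) = 2 * T := by
      field_simp
    calc ((n : ℝ) - 1) / r ^ 2 * (2 * c * Real.sin x / s - 2 * T * (r ^ 2 / ((n : ℝ) - 1)))
        = ((n : ℝ) - 1) / r ^ 2 * (2 * c * Real.sin x / s)
          - ((n : ℝ) - 1) / r ^ 2 * (2 * T * (r ^ 2 / ((n : ℝ) - 1))) := by ring
      _ = 2 * c * s * Real.sin x - 2 * T := by rw [e1, e2]
      _ = -2 * (-(c * s) * Real.sin x + T) := by ring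
  · rw [hder']
    simp only [hxT]
    have hinv : Real.sin x / (x * Real.sin x + Real.cos x)
        = c * (((n : ℝ) - 1) / r ^ 2) * Real.sin x := by
      rw [div_eq_iff hD]
      field_simp
      linear_combination (-Real.sin x) * hcrel
    rw [hinv]
    have hsT : s * T = x := hxT
    have h2 : s * s = ((n : ℝ) - 1) / r ^ 2 := by nlinarith [hs2]
    linear_combination (-(c * Real.sin x)) * h2 + hsT
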